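/- The determinant of the relativistic stress-energy tensor equals ρ p^n: for real c > 0, 0 ≤ |v| < c (v ∈ ℝ^n), ρ ≥ 0, p ≥ 0, the (1+n)×(1+n) matrix A with entries A₀₀ = (ρc²+p)/(c²−|v|²) − p/c², A_{0j} = A_{j0} = ((ρc²+p)/(c²−|v|²)) v_j, and A_{jk} = ((ρc²+p)/(c²−|v|²)) v_j v_k + p δ_{jk} satisfies det A = ρ p^n, and A is positive semi-definite. -/

import Mathlib

open Matrix

set_option maxHeartbeats 1000000 in
theorem stmt14 (n : ℕ) (hn : 1 ≤ n)
    (c : ℝ) (hc : 0 < c) (v : Fin n → ℝ) (hv : ∑ i, v i ^ 2 < c ^ 2)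
    (ρ p : ℝ) (hρ : 0 ≤ ρ) (hp : 0 ≤ p)
    (g : ℝ) (hg : g = (ρ * c ^ 2 + p) / (c ^ 2 - ∑ i, v i ^ 2))
    (A : Matrix (Unit ⊕ Fin n) (Unit ⊕ Fin n) ℝ)
    (hA : A = Matrix.fromBlocks
        (Matrix.of fun _ _ : Unit => g - p / c ^ 2)
        (Matrix.of fun (_ : Unit) (j : Fin n) => g * v j)
        (Matrix.of fun (i : Fin n) (_ : Unit) => g * v i)
        (Matrix.of fun i j : Fin n =>
          g * v i * v j + p * (if i = j then 1 else 0))) :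
    A.det = ρ * p ^ n ∧ A.PosSemidef := by
  set s : ℝ := ∑ i, v i ^ 2 with hs_def
  have hs0 : 0 ≤ s := Finset.sum_nonneg fun i _ => sq_nonneg _
  have hcs : 0 < c ^ 2 - s := by linarith
  have hc2 : (0:ℝ) < c ^ 2 := by positivity
  have hgcs : g * (c ^ 2 - s) = ρ * c ^ 2 + p := by
    rw [hg]; field_simp
  constructor
  · -- determinant
    rcases eq_or_ne p 0 with hp0 | hp0
    · -- p = 0 : matrix is rank one, det = 0
      subst hp0
      have hdet : A.det = 0 := by
        rw [← Matrix.exists_mulVec_eq_zero_iff]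
        set i0 : Fin n := ⟨0, hn⟩
        refine ⟨Sum.elim (fun _ => -v i0) (fun j => if j = i0 then 1 else 0), ?_, ?_⟩
        · intro h
          have := congrFun h (Sum.inr i0)
          simp at this
        · ext (i | i) <;>
            simp [hA, Matrix.mulVec, dotProduct, Fintype.sum_sum_type,
              mul_ite, Finset.sum_ite_eq', mul_comm, mul_assoc, mul_left_comm]
      rw [hdet, zero_pow (by omega : n ≠ 0), mul_zero]
    · set a : ℝ := g - p / c ^ 2 with ha_def
      rcases eq_or_ne a 0 with ha0 | ha0
      · -- a = 0 forces ρ = 0 and v = 0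
        have hgc : g * c ^ 2 = p := by
          have h := ha0
          rw [ha_def, sub_eq_zero] at h
          rw [h]; field_simp
        have key : ρ * (c ^ 2 * c ^ 2) + p * s = 0 := by nlinarith [hgcs]
        have h1 : 0 ≤ p * s := mul_nonneg hp hs0
        have h2 : (0:ℝ) < c ^ 2 * c ^ 2 := by positivity
        have hρ0 : ρ = 0 := by nlinarith
        have hsz : s = 0 := by
          have hps : p * s = 0 := by nlinarith
          rcases mul_eq_zero.mp hps with h | h
          · exact absurd h hp0
          · exact h
        have hv0 : ∀ i, v i = 0 := by
          intro i
          have h : ∑ j, v j ^ 2 = 0 := by rw [← hs_def]; exact hsz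
          have h3 := (Finset.sum_eq_zero_iff_of_nonneg (fun j _ => sq_nonneg (v j))).mp h i
            (Finset.mem_univ i)
          exact pow_eq_zero_iff two_ne_zero |>.mp h3
        rw [hA]
        have hB : (Matrix.of fun (_ : Unit) (j : Fin n) => g * v j)
            = (0 : Matrix Unit (Fin n) ℝ) := by ext i j; simp [hv0]
        have hC : (Matrix.of fun (i : Fin n) (_ : Unit) => g * v i)
            = (0 : Matrix (Fin n) Unit ℝ) := by ext i j; simp [hv0]
        rw [hB, hC, Matrix.det_fromBlocks_zero₂₁, hρ0, zero_mul]
        rw [Matrix.det_unique]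
        rw [ha0]
        simp
      · -- main case : p ≠ 0, a ≠ 0, use Schur complement
        haveI : Invertible (Matrix.of fun _ _ : Unit => a) :=
          ⟨Matrix.of fun _ _ : Unit => a⁻¹,
            by ext i j; simp [Matrix.mul_apply, inv_mul_cancel₀ ha0, Matrix.one_apply],
            by ext i j; simp [Matrix.mul_apply, mul_inv_cancel₀ ha0, Matrix.one_apply]⟩
        rw [hA, Matrix.det_fromBlocks₁₁]
        set γ : ℝ := g - g ^ 2 / a with hγ_def
        have hblock : (Matrix.of fun i j : Fin n =>
                g * v i * v j + p * (if i = j then 1 else 0))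
              - (Matrix.of fun (i : Fin n) (_ : Unit) => g * v i)
                * ⅟(Matrix.of fun _ _ : Unit => a)
                * (Matrix.of fun (_ : Unit) (j : Fin n) => g * v j)
            = p • (1 + Matrix.replicateCol Unit ((γ / p) • v) * Matrix.replicateRow Unit v) := by
          have hinv : (⅟(Matrix.of fun _ _ : Unit => a) : Matrix Unit Unit ℝ)
              = Matrix.of fun _ _ => a⁻¹ := invOf_eq_right_inv
            (by ext i j; simp [Matrix.mul_apply, mul_inv_cancel₀ ha0, Matrix.one_apply])
          ext i j
          rw [hinv]
          simp only [Matrix.sub_apply, Matrix.of_apply, Matrix.mul_apply, Matrix.smul_apply,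
            Matrix.add_apply, Matrix.one_apply, Matrix.replicateCol_apply, Matrix.replicateRow_apply,
            Finset.univ_unique, Finset.sum_singleton, Pi.smul_apply, smul_eq_mul]
          split_ifs with h
          · rw [hγ_def]
            field_simp [ha0, hp0]
            ring
          · rw [hγ_def]
            field_simp [ha0, hp0]
            ring
        rw [hblock, Matrix.det_smul, Matrix.det_one_add_replicateCol_mul_replicateRow, Matrix.det_unique]
        have hdot : v ⬝ᵥ ((γ / p) • v) = γ / p * s := by
          simp only [dotProduct, Pi.smul_apply, smul_eq_mul, hs_def, Finset.mul_sum]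
          exact Finset.sum_congr rfl fun i _ => by ring
        rw [hdot]
        simp only [Matrix.of_apply, Fintype.card_fin]
        obtain ⟨m, rfl⟩ : ∃ m, n = m + 1 := ⟨n - 1, by omega⟩
        have hac : a * c ^ 2 = g * c ^ 2 - p := by
          rw [ha_def]; field_simp
        have h2 : a * γ = a * g - g ^ 2 := by
          rw [hγ_def]; field_simp
        have hkey : a * (p * (1 + γ / p * s)) = ρ * p := by
          have e1 : a * (p * (1 + γ / p * s)) = a * p + a * γ * s := by
            field_simp
          rw [e1, h2]
          have hmul : (a * p + (a * g - g ^ 2) * s - ρ * p) * c ^ 2 = 0 := by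
            linear_combination (p + g * s) * hac + p * hgcs
          have hX := (mul_eq_zero.mp hmul).resolve_right (by positivity)
          linarith
        calc a * (p ^ (m + 1) * (1 + γ / p * s))
            = (a * (p * (1 + γ / p * s))) * p ^ m := by ring
          _ = ρ * p ^ (m + 1) := by rw [hkey]; ring
  · -- positive semidefinite
    refine Matrix.PosSemidef.of_dotProduct_mulVec_nonneg ?_ ?_
    · rw [Matrix.IsHermitian, hA]
      ext (i | i) (j | j) <;>
        simp [Matrix.conjTranspose_apply, eq_comm, mul_comm, mul_left_comm]
    · intro x
      set t : ℝ := x (Sum.inl ()) with ht_def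
      set w : ℝ := ∑ i, v i * x (Sum.inr i) with hw_def
      set U : ℝ := ∑ i, x (Sum.inr i) ^ 2 with hU_def
      have hU0 : 0 ≤ U := Finset.sum_nonneg fun i _ => sq_nonneg _
      have hcauchy : w ^ 2 ≤ s * U := by
        rw [hw_def, hs_def, hU_def]
        exact Finset.sum_mul_sq_le_sq_mul_sq Finset.univ v (fun i => x (Sum.inr i))
      have hrow : ∀ i : Fin n, (∑ j, (g * v i * v j + p * (if i = j then 1 else 0))
          * x (Sum.inr j)) = g * v i * w + p * x (Sum.inr i) := by
        intro i
        calc ∑ j, (g * v i * v j + p * (if i = j then 1 else 0)) * x (Sum.inr j)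
            = ∑ j, (g * v i * (v j * x (Sum.inr j))
                + p * (if i = j then x (Sum.inr j) else 0)) :=
              Finset.sum_congr rfl fun j _ => by split_ifs <;> ring
          _ = g * v i * w + p * x (Sum.inr i) := by
              rw [Finset.sum_add_distrib, ← Finset.mul_sum, ← Finset.mul_sum, ← hw_def,
                Finset.sum_ite_eq, if_pos (Finset.mem_univ i)]
      have hcol : ∑ j, g * v j * x (Sum.inr j) = g * w := by
        rw [hw_def, Finset.mul_sum]
        exact Finset.sum_congr rfl fun j _ => by ring
      have hform : dotProduct (star x) (A *ᵥ x)
          = (g - p / c ^ 2) * t ^ 2 + 2 * g * t * w + g * w ^ 2 + p * U := by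
        rw [hA]
        simp only [dotProduct, Matrix.mulVec, Pi.star_apply, star_trivial, id_eq,
          Fintype.sum_sum_type, Finset.univ_unique, Finset.sum_singleton,
          Matrix.fromBlocks_apply₁₁, Matrix.fromBlocks_apply₁₂, Matrix.fromBlocks_apply₂₁,
          Matrix.fromBlocks_apply₂₂, Matrix.of_apply,
          show (default : Unit) = () from rfl]
        rw [hcol, ← ht_def]
        rw [show (∑ i, x (Sum.inr i) * (g * v i * t
              + ∑ j, (g * v i * v j + p * (if i = j then 1 else 0)) * x (Sum.inr j)))
            = ∑ i, ((g * t) * (v i * x (Sum.inr i)) + ((g * w) * (v i * x (Sum.inr i))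
                + p * x (Sum.inr i) ^ 2)) from
          Finset.sum_congr rfl fun i _ => by rw [hrow i]; ring]
        rw [Finset.sum_add_distrib, Finset.sum_add_distrib, ← Finset.mul_sum, ← Finset.mul_sum,
          ← Finset.mul_sum, ← hw_def, ← hU_def]
        ring
      rw [hform]
      have hc0 : (c:ℝ) ≠ 0 := ne_of_gt hc
      have e : (g - p / c ^ 2) * t ^ 2 + 2 * g * t * w + g * w ^ 2 + p * U
          = ((g * c ^ 2 - p) * t ^ 2 + c ^ 2 * (2 * g * t * w + g * w ^ 2 + p * U)) / c ^ 2 := by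
        field_simp
        ring
      rw [e]
      apply div_nonneg _ hc2.le
      rcases eq_or_lt_of_le hs0 with hsz | hsp
      · -- s = 0 : then w = 0
        have hw0 : w = 0 := by nlinarith [sq_nonneg w]
        rw [hw0]
        have hgcp : g * c ^ 2 = ρ * c ^ 2 + p := by rw [← hgcs, ← hsz]; ring
        nlinarith [sq_nonneg t, mul_nonneg hp hU0, mul_nonneg hρ (sq_nonneg (c * t))]
      · have h2 : 0 ≤ p * (s * t + c ^ 2 * w) ^ 2 := mul_nonneg hp (sq_nonneg _)
        have h3 : 0 ≤ p * (c ^ 2 * (c ^ 2 - s)) * (s * U - w ^ 2) :=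
          mul_nonneg (mul_nonneg hp (mul_nonneg hc2.le hcs.le)) (by linarith)
        have h4 : 0 ≤ ρ * s * (c ^ 2 * (t + w)) ^ 2 :=
          mul_nonneg (mul_nonneg hρ hsp.le) (sq_nonneg _)
        have key : s * (c ^ 2 - s) * ((g * c ^ 2 - p) * t ^ 2
              + c ^ 2 * (2 * g * t * w + g * w ^ 2 + p * U))
            = ρ * s * (c ^ 2 * (t + w)) ^ 2 + p * (s * t + c ^ 2 * w) ^ 2
              + p * (c ^ 2 * (c ^ 2 - s)) * (s * U - w ^ 2) := by
          linear_combination (s * c ^ 2 * (t + w) ^ 2) * hgcs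
        have hpos : 0 < s * (c ^ 2 - s) := mul_pos hsp hcs
        rw [← mul_nonneg_iff_of_pos_left hpos, key]
        linarith [h2, h3, h4]
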